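/- Let \mu_1, \dots, \mu_r be measures on the unit circle with infinite support and let all n_j, m_j be nonnegative integers. The pair (\bm{n}, \bm{m}) is normal (i.e., there is a unique Laurent polynomial \Phi \in \operatorname{span}\{z^p : -|\bm{m}| \le p \le |\bm{n}|\} with leading coefficient of z^{|\bm{n}|} equal to 1 satisfying \int \Phi(w) w^{-p} d\mu_j(w) = 0 for p = -m_j, \dots, n_j - 1 and all j) if and only if the pair (\bm{m}, \bm{n}) is normal (same condition with the roles of \bm{n} and \bm{m} swapped). Moreover, in this case \Phi_{\bm{n},\bm{m}}^\sharp = \Phi_{\bm{m},\bm{n}}^*, where \Phi^\sharp(z) = \overline{\Phi(1/\bar{z})} and \Phi_{\bm{m},\bm{n}}^* is the solution normalized to have coefficient 1 on z^{-|\bm{n}|} satisfying the shifted orthogonality \int \Phi^*(w) w^{-p} d\mu_j(w) = 0 for p = -n_j + 1, \dots, m_j. -/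

import Mathlib

open MeasureTheory

/-- `c : ℤ → ℂ` is the coefficient sequence of the Hermite–Padé polynomial
`Φ_{n,m} ∈ span{z^p : -|m| ≤ p ≤ |n|}` with leading coefficient `1` at `z^{|n|}`,
satisfying `∫ Φ(w) w^{-p} dμⱼ = 0` for `p = -mⱼ, …, nⱼ - 1`. -/
def IsPhi {r : ℕ} (μ : Fin r → Measure ℂ) (n m : Fin r → ℕ) (c : ℤ → ℂ) : Prop :=
  (∀ k : ℤ, k ∉ Finset.Icc (-(∑ j, m j : ℤ)) ((∑ j, n j : ℤ)) → c k = 0) ∧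
  c ((∑ j, n j : ℤ)) = 1 ∧
  (∀ j, ∀ p ∈ Finset.Icc (-(m j : ℤ)) ((n j : ℤ) - 1),
    ∫ z, (∑ k ∈ Finset.Icc (-(∑ j, m j : ℤ)) ((∑ j, n j : ℤ)), c k * z ^ k) * z ^ (-p)
      ∂(μ j) = 0)

/-- `c : ℤ → ℂ` is the coefficient sequence of the starred Hermite–Padé polynomial
`Φ*_{n,m} ∈ span{z^p : -|m| ≤ p ≤ |n|}` with coefficient `1` at `z^{-|m|}`,
satisfying `∫ Φ*(w) w^{-p} dμⱼ = 0` for `p = -mⱼ + 1, …, nⱼ`. -/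
def IsPhiStar {r : ℕ} (μ : Fin r → Measure ℂ) (n m : Fin r → ℕ) (c : ℤ → ℂ) : Prop :=
  (∀ k : ℤ, k ∉ Finset.Icc (-(∑ j, m j : ℤ)) ((∑ j, n j : ℤ)) → c k = 0) ∧
  c (-(∑ j, m j : ℤ)) = 1 ∧
  (∀ j, ∀ p ∈ Finset.Icc (-(m j : ℤ) + 1) ((n j : ℤ)),
    ∫ z, (∑ k ∈ Finset.Icc (-(∑ j, m j : ℤ)) ((∑ j, n j : ℤ)), c k * z ^ k) * z ^ (-p)
      ∂(μ j) = 0)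

/-- The pair `(n, m)` is normal: there is a unique `Φ_{n,m}`. -/
def NormalPair {r : ℕ} (μ : Fin r → Measure ℂ) (n m : Fin r → ℕ) : Prop :=
  ∃! c : ℤ → ℂ, IsPhi μ n m c

section Aux

open Finset

variable {r : ℕ}

/-- The `s`-th moment of `μ j`. -/
noncomputable def mom (μ : Fin r → Measure ℂ) (j : Fin r) (s : ℤ) : ℂ := ∫ z, z ^ s ∂(μ j)

variable {μ : Fin r → Measure ℂ}

lemma ae_ne_zero (hcirc : ∀ j, ∀ᵐ z ∂(μ j), ‖z‖ = 1) (j : Fin r) :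
    ∀ᵐ z ∂(μ j), z ≠ 0 := by
  filter_upwards [hcirc j] with z hz
  intro h; rw [h] at hz; simp at hz

lemma integrable_zpow [∀ j, IsFiniteMeasure (μ j)]
    (hcirc : ∀ j, ∀ᵐ z ∂(μ j), ‖z‖ = 1) (j : Fin r) (s : ℤ) :
    Integrable (fun z : ℂ => z ^ s) (μ j) := by
  refine (integrable_const (1 : ℝ)).mono' ?_ ?_
  · exact (by measurability : Measurable fun z : ℂ => z ^ s).aestronglyMeasurable
  · filter_upwards [hcirc j] with z hz
    rw [norm_zpow, hz, one_zpow]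

lemma integral_sum_eq [∀ j, IsFiniteMeasure (μ j)]
    (hcirc : ∀ j, ∀ᵐ z ∂(μ j), ‖z‖ = 1) (j : Fin r) (c : ℤ → ℂ)
    (S : Finset ℤ) (p : ℤ) :
    ∫ z, (∑ k ∈ S, c k * z ^ k) * z ^ (-p) ∂(μ j) = ∑ k ∈ S, c k * mom μ j (k - p) := by
  have h1 : ∫ z, (∑ k ∈ S, c k * z ^ k) * z ^ (-p) ∂(μ j)
      = ∫ z, ∑ k ∈ S, c k * z ^ (k - p) ∂(μ j) := by
    refine integral_congr_ae ?_
    filter_upwards [ae_ne_zero hcirc j] with z hz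
    rw [Finset.sum_mul]
    refine Finset.sum_congr rfl fun k _ => ?_
    rw [mul_assoc, ← zpow_add₀ hz, sub_eq_add_neg]
  rw [h1, integral_finset_sum S fun k _ => ((integrable_zpow hcirc j (k - p)).const_mul (c k))]
  exact Finset.sum_congr rfl fun k _ => integral_const_mul _ _

lemma conj_eq_inv {z : ℂ} (h : ‖z‖ = 1) : (starRingEnd ℂ) z = z⁻¹ := by
  have h1 : z * (starRingEnd ℂ) z = 1 := by
    rw [Complex.mul_conj]; norm_cast; rw [Complex.normSq_eq_norm_sq, h]; norm_num
  exact eq_inv_of_mul_eq_one_right h1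

lemma mom_conj (hcirc : ∀ j, ∀ᵐ z ∂(μ j), ‖z‖ = 1) (j : Fin r) (s : ℤ) :
    (starRingEnd ℂ) (mom μ j s) = mom μ j (-s) := by
  rw [mom, ← integral_conj]
  refine integral_congr_ae ?_
  filter_upwards [hcirc j] with z hz
  rw [map_zpow₀, conj_eq_inv hz, inv_zpow, ← zpow_neg]

/-- A generic linear system of Hermite–Padé type. -/
def GenSys (μ : Fin r → Measure ℂ) (a b : ℤ) (lo hi : Fin r → ℤ) (e : ℤ) (c : ℤ → ℂ) : Prop :=
  (∀ k : ℤ, k ∉ Finset.Icc a b → c k = 0) ∧ c e = 1 ∧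
  ∀ j, ∀ p ∈ Finset.Icc (lo j) (hi j), ∑ k ∈ Finset.Icc a b, c k * mom μ j (k - p) = 0

lemma isPhi_iff [∀ j, IsFiniteMeasure (μ j)]
    (hcirc : ∀ j, ∀ᵐ z ∂(μ j), ‖z‖ = 1) (n m : Fin r → ℕ) (c : ℤ → ℂ) :
    IsPhi μ n m c ↔ GenSys μ (-(∑ j, m j : ℤ)) ((∑ j, n j : ℤ))
      (fun j => -(m j : ℤ)) (fun j => (n j : ℤ) - 1) ((∑ j, n j : ℤ)) c := by
  unfold IsPhi GenSys
  refine and_congr Iff.rfl (and_congr Iff.rfl ?_)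
  refine forall_congr' fun j => forall₂_congr fun p _ => ?_
  rw [integral_sum_eq hcirc]

lemma isPhiStar_iff [∀ j, IsFiniteMeasure (μ j)]
    (hcirc : ∀ j, ∀ᵐ z ∂(μ j), ‖z‖ = 1) (n m : Fin r → ℕ) (c : ℤ → ℂ) :
    IsPhiStar μ n m c ↔ GenSys μ (-(∑ j, m j : ℤ)) ((∑ j, n j : ℤ))
      (fun j => -(m j : ℤ) + 1) (fun j => (n j : ℤ)) (-(∑ j, m j : ℤ)) c := by
  unfold IsPhiStar GenSys
  refine and_congr Iff.rfl (and_congr Iff.rfl ?_)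
  refine forall_congr' fun j => forall₂_congr fun p _ => ?_
  rw [integral_sum_eq hcirc]

/-- Reflected–conjugated coefficient sequence. -/
def cneg (c : ℤ → ℂ) : ℤ → ℂ := fun k => (starRingEnd ℂ) (c (-k))

lemma cneg_cneg (c : ℤ → ℂ) : cneg (cneg c) = c := by
  funext k; simp [cneg]

lemma genSys_cneg (hcirc : ∀ j, ∀ᵐ z ∂(μ j), ‖z‖ = 1)
    {a b e : ℤ} {lo hi : Fin r → ℤ} {c : ℤ → ℂ}
    (a' b' e' : ℤ) (lo' hi' : Fin r → ℤ)
    (ha : a' = -b) (hb : b' = -a) (he : e' = -e)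
    (hlo : ∀ j, lo' j = -(hi j)) (hhi : ∀ j, hi' j = -(lo j))
    (h : GenSys μ a b lo hi e c) :
    GenSys μ a' b' lo' hi' e' (cneg c) := by
  obtain ⟨hsupp, hnorm, horth⟩ := h
  subst ha hb he
  refine ⟨?_, ?_, ?_⟩
  · intro k hk
    have : -k ∉ Finset.Icc a b := by
      simp only [Finset.mem_Icc] at hk ⊢; omega
    simp [cneg, hsupp _ this]
  · simp [cneg, hnorm]
  · intro j p hp
    have hmem : -p ∈ Finset.Icc (lo j) (hi j) := by
      simp only [Finset.mem_Icc, hlo, hhi] at hp ⊢; omega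
    have key : ∑ k ∈ Finset.Icc (-b) (-a), cneg c k * mom μ j (k - p)
        = (starRingEnd ℂ) (∑ k ∈ Finset.Icc a b, c k * mom μ j (k - (-p))) := by
      rw [map_sum]
      refine Finset.sum_nbij' (fun k => -k) (fun k => -k) ?_ ?_ ?_ ?_ ?_
      · intro k hk; simp only [Finset.mem_Icc] at hk ⊢; omega
      · intro k hk; simp only [Finset.mem_Icc] at hk ⊢; omega
      · intro k _; ring
      · intro k _; ring
      · intro k _
        show cneg c k * mom μ j (k - p) = (starRingEnd ℂ) (c (-k) * mom μ j (-k - -p))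
        rw [map_mul, mom_conj hcirc]
        have h2 : -(-k - -p) = k - p := by ring
        rw [h2]
        rfl
    rw [key, horth j (-p) hmem, map_zero]

/-- Triviality of the homogeneous kernel of a generic system. -/
def KerTriv (μ : Fin r → Measure ℂ) (a b : ℤ) (lo hi : Fin r → ℤ) (e : ℤ) : Prop :=
  ∀ c : ℤ → ℂ, (∀ k : ℤ, k ∉ Finset.Icc a b → c k = 0) →
    (∀ j, ∀ p ∈ Finset.Icc (lo j) (hi j),
      ∑ k ∈ Finset.Icc a b, c k * mom μ j (k - p) = 0) →
    c e = 0 → ∀ k, c k = 0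

lemma kerTriv_of_exu {a b e : ℤ} {lo hi : Fin r → ℤ}
    (h : ∃! c : ℤ → ℂ, GenSys μ a b lo hi e c) : KerTriv μ a b lo hi e := by
  obtain ⟨c₀, h₀, hu⟩ := h
  intro d hsupp horth he k
  have h₁ : GenSys μ a b lo hi e (fun k => c₀ k + d k) := by
    obtain ⟨hs₀, hn₀, ho₀⟩ := h₀
    refine ⟨fun k hk => by show c₀ k + d k = 0; rw [hs₀ k hk, hsupp k hk, add_zero],
      by show c₀ e + d e = 1; rw [hn₀, he, add_zero], ?_⟩
    intro j p hp
    have : ∑ k ∈ Finset.Icc a b, (c₀ k + d k) * mom μ j (k - p)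
        = (∑ k ∈ Finset.Icc a b, c₀ k * mom μ j (k - p))
          + ∑ k ∈ Finset.Icc a b, d k * mom μ j (k - p) := by
      rw [← Finset.sum_add_distrib]
      exact Finset.sum_congr rfl fun k _ => by ring
    rw [this, ho₀ j p hp, horth j p hp, add_zero]
  have := hu _ h₁
  have := congrFun this k
  linear_combination this

lemma uniq_of_kerTriv {a b e : ℤ} {lo hi : Fin r → ℤ}
    (h : KerTriv μ a b lo hi e) {c c' : ℤ → ℂ}
    (hc : GenSys μ a b lo hi e c) (hc' : GenSys μ a b lo hi e c') : c = c' := by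
  obtain ⟨hs, hn, ho⟩ := hc
  obtain ⟨hs', hn', ho'⟩ := hc'
  funext k
  have := h (fun k => c k - c' k)
    (fun k hk => by show c k - c' k = 0; rw [hs k hk, hs' k hk, sub_zero])
    (fun j p hp => by
      have : ∑ k ∈ Finset.Icc a b, (c k - c' k) * mom μ j (k - p)
          = (∑ k ∈ Finset.Icc a b, c k * mom μ j (k - p))
            - ∑ k ∈ Finset.Icc a b, c' k * mom μ j (k - p) := by
        rw [← Finset.sum_sub_distrib]
        exact Finset.sum_congr rfl fun k _ => by ring
      rw [this, ho j p hp, ho' j p hp, sub_zero])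
    (by show c e - c' e = 0; rw [hn, hn', sub_self]) k
  linear_combination this

/-- Two sums over intervals agree when `c` vanishes on the symmetric difference. -/
lemma sum_congr_supp (c f : ℤ → ℂ) {s t : Finset ℤ}
    (h : ∀ k, ((k ∈ s ∧ k ∉ t) ∨ (k ∈ t ∧ k ∉ s)) → c k = 0) :
    ∑ k ∈ s, c k * f k = ∑ k ∈ t, c k * f k := by
  have h1 : ∑ k ∈ s, c k * f k = ∑ k ∈ s ∪ t, c k * f k :=
    Finset.sum_subset Finset.subset_union_left
      (fun k hk hk' => by rw [h k (Or.inr ⟨(Finset.mem_union.mp hk).resolve_left hk', hk'⟩), zero_mul])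
  have h2 : ∑ k ∈ t, c k * f k = ∑ k ∈ s ∪ t, c k * f k :=
    Finset.sum_subset Finset.subset_union_right
      (fun k hk hk' => by rw [h k (Or.inl ⟨(Finset.mem_union.mp hk).resolve_right hk', hk'⟩), zero_mul])
  rw [h1, h2]

lemma sum_shift (c f : ℤ → ℂ) (a b t : ℤ) :
    ∑ k ∈ Finset.Icc a b, c (k + t) * f k
      = ∑ k ∈ Finset.Icc (a + t) (b + t), c k * f (k - t) := by
  refine Finset.sum_nbij' (fun k => k + t) (fun k => k - t) ?_ ?_ ?_ ?_ ?_
  · intro k hk; simp only [Finset.mem_Icc] at hk ⊢; omega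
  · intro k hk; simp only [Finset.mem_Icc] at hk ⊢; omega
  · intro k _; ring
  · intro k _; ring
  · intro k _; simp

lemma kerTriv_up {A B : ℤ} {lo hi : Fin r → ℤ}
    (h : KerTriv μ A B lo hi B) :
    KerTriv μ A B (fun j => lo j + 1) (fun j => hi j + 1) A := by
  intro c hsupp horth he
  have hd : ∀ k, c (k + 1) = 0 := by
    refine h (fun k => c (k + 1)) ?_ ?_ ?_
    · intro k hk
      show c (k + 1) = 0
      simp only [Finset.mem_Icc] at hk
      rcases lt_or_ge k A with hlt | hge
      · rcases eq_or_lt_of_le (by omega : k + 1 ≤ A) with heq | hlt'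
        · rw [heq, he]
        · exact hsupp _ (by simp only [Finset.mem_Icc]; omega)
      · exact hsupp _ (by simp only [Finset.mem_Icc]; omega)
    · intro j p hp
      have e1 : ∑ k ∈ Finset.Icc A B, c (k + 1) * mom μ j (k - p)
          = ∑ k ∈ Finset.Icc (A + 1) (B + 1), c k * mom μ j (k - (p + 1)) := by
        rw [sum_shift c (fun k => mom μ j (k - p)) A B 1]
        exact Finset.sum_congr rfl fun k _ => by rw [(by ring : k - 1 - p = k - (p + 1))]
      have e2 : ∑ k ∈ Finset.Icc (A + 1) (B + 1), c k * mom μ j (k - (p + 1))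
          = ∑ k ∈ Finset.Icc A B, c k * mom μ j (k - (p + 1)) := by
        refine sum_congr_supp c _ fun k hk => ?_
        rcases hk with ⟨h1, h2⟩ | ⟨h1, h2⟩
        · simp only [Finset.mem_Icc] at h1 h2
          have : k = B + 1 := by omega
          exact hsupp _ (by simp only [Finset.mem_Icc]; omega)
        · simp only [Finset.mem_Icc] at h1 h2
          have : k = A := by omega
          rw [this, he]
      rw [e1, e2]
      refine horth j (p + 1) ?_
      simp only [Finset.mem_Icc] at hp ⊢
      omega
    · exact hsupp _ (by simp only [Finset.mem_Icc]; omega)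
  intro k
  have := hd (k - 1)
  rwa [sub_add_cancel] at this

lemma kerTriv_down {A B : ℤ} {lo hi : Fin r → ℤ}
    (h : KerTriv μ A B (fun j => lo j + 1) (fun j => hi j + 1) A) :
    KerTriv μ A B lo hi B := by
  intro c hsupp horth he
  have hd : ∀ k, c (k + -1) = 0 := by
    refine h (fun k => c (k + -1)) ?_ ?_ ?_
    · intro k hk
      show c (k + -1) = 0
      simp only [Finset.mem_Icc] at hk
      rcases lt_or_ge B k with hlt | hge
      · rcases eq_or_lt_of_le (by omega : B ≤ k - 1) with heq | hlt'
        · rw [(by omega : k + -1 = B), he]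
        · exact hsupp _ (by simp only [Finset.mem_Icc]; omega)
      · exact hsupp _ (by simp only [Finset.mem_Icc]; omega)
    · intro j p hp
      have e1 : ∑ k ∈ Finset.Icc A B, c (k + -1) * mom μ j (k - p)
          = ∑ k ∈ Finset.Icc (A + -1) (B + -1), c k * mom μ j (k - (p - 1)) := by
        rw [sum_shift c (fun k => mom μ j (k - p)) A B (-1)]
        exact Finset.sum_congr rfl fun k _ => by rw [(by ring : k - -1 - p = k - (p - 1))]
      have e2 : ∑ k ∈ Finset.Icc (A + -1) (B + -1), c k * mom μ j (k - (p - 1))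
          = ∑ k ∈ Finset.Icc A B, c k * mom μ j (k - (p - 1)) := by
        refine sum_congr_supp c _ fun k hk => ?_
        rcases hk with ⟨h1, h2⟩ | ⟨h1, h2⟩
        · simp only [Finset.mem_Icc] at h1 h2
          have : k = A - 1 := by omega
          exact hsupp _ (by simp only [Finset.mem_Icc]; omega)
        · simp only [Finset.mem_Icc] at h1 h2
          have : k = B := by omega
          rw [this, he]
      rw [e1, e2]
      refine horth j (p - 1) ?_
      simp only [Finset.mem_Icc] at hp ⊢
      omega
    · exact hsupp _ (by simp only [Finset.mem_Icc]; omega)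
  intro k
  have := hd (k + 1)
  rwa [(by ring : k + 1 + -1 = k)] at this

lemma exists_genSys (μ : Fin r → Measure ℂ) (a b e : ℤ) (lo hi : Fin r → ℤ)
    (he : e ∈ Finset.Icc a b)
    (hcard : ((Finset.univ : Finset (Fin r)).sigma fun j => Finset.Icc (lo j) (hi j)).card + 1
      = (Finset.Icc a b).card)
    (hker : KerTriv μ a b lo hi e) : ∃ c : ℤ → ℂ, GenSys μ a b lo hi e c := by
  classical
  set σ : Finset ((j : Fin r) × ℤ) :=
    (Finset.univ : Finset (Fin r)).sigma fun j => Finset.Icc (lo j) (hi j) with hσ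
  let T : ({k // k ∈ Finset.Icc a b} → ℂ) →ₗ[ℂ] ℂ × ({s // s ∈ σ} → ℂ) :=
    { toFun := fun x => (x ⟨e, he⟩,
        fun s => ∑ k : {k // k ∈ Finset.Icc a b}, x k * mom μ s.1.1 ((k : ℤ) - s.1.2)),
      map_add' := fun x y => by
        refine Prod.ext ?_ ?_
        · rfl
        · funext s
          simp [add_mul, Finset.sum_add_distrib]
      map_smul' := fun t x => by
        refine Prod.ext ?_ ?_
        · simp
        · funext s
          simp [Finset.mul_sum, mul_assoc] }
  have hextend : ∀ x : {k // k ∈ Finset.Icc a b} → ℂ, ∃ c : ℤ → ℂ,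
      (∀ k : ℤ, k ∉ Finset.Icc a b → c k = 0) ∧
      (∀ k : {k // k ∈ Finset.Icc a b}, c k = x k) ∧
      (∀ j p, ∑ k ∈ Finset.Icc a b, c k * mom μ j (k - p)
        = ∑ k : {k // k ∈ Finset.Icc a b}, x k * mom μ j ((k : ℤ) - p)) := by
    intro x
    refine ⟨fun k => if h : k ∈ Finset.Icc a b then x ⟨k, h⟩ else 0,
      fun k hk => dif_neg hk, fun k => ?_, fun j p => ?_⟩
    · show (if h : (k : ℤ) ∈ Finset.Icc a b then x ⟨k, h⟩ else 0) = x k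
      rw [dif_pos k.2, Subtype.coe_eta]
    · rw [← Finset.sum_coe_sort]
      refine Finset.sum_congr rfl fun k _ => ?_
      show (if h : (k : ℤ) ∈ Finset.Icc a b then x ⟨k, h⟩ else 0) * mom μ j ((k : ℤ) - p)
        = x k * mom μ j ((k : ℤ) - p)
      rw [dif_pos k.2, Subtype.coe_eta]
  have hinj : Function.Injective T := by
    rw [← LinearMap.ker_eq_bot, LinearMap.ker_eq_bot']
    intro x hx
    obtain ⟨c, hc0, hcx, hcsum⟩ := hextend x
    have h1 : ∀ j, ∀ p ∈ Finset.Icc (lo j) (hi j),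
        ∑ k ∈ Finset.Icc a b, c k * mom μ j (k - p) = 0 := by
      intro j p hp
      rw [hcsum j p]
      exact congrFun (congrArg Prod.snd hx)
        ⟨⟨j, p⟩, Finset.mem_sigma.mpr ⟨Finset.mem_univ j, hp⟩⟩
    have hce : c e = 0 := by
      rw [hcx ⟨e, he⟩]; exact congrArg Prod.fst hx
    have hall := hker c hc0 h1 hce
    funext k
    have hk := hall k.1
    rw [hcx k] at hk
    exact hk
  have hdim : Module.finrank ℂ ({k // k ∈ Finset.Icc a b} → ℂ)
      = Module.finrank ℂ (ℂ × ({s // s ∈ σ} → ℂ)) := by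
    rw [Module.finrank_fintype_fun_eq_card, Module.finrank_prod, Module.finrank_self,
      Module.finrank_fintype_fun_eq_card, Fintype.card_coe, Fintype.card_coe]
    omega
  have hsurj : Function.Surjective T :=
    (LinearMap.injective_iff_surjective_of_finrank_eq_finrank hdim).mp hinj
  obtain ⟨x, hx⟩ := hsurj (1, 0)
  obtain ⟨c, hc0, hcx, hcsum⟩ := hextend x
  refine ⟨c, hc0, ?_, ?_⟩
  · rw [hcx ⟨e, he⟩]; exact congrArg Prod.fst hx
  · intro j p hp
    rw [hcsum j p]
    exact congrFun (congrArg Prod.snd hx)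
      ⟨⟨j, p⟩, Finset.mem_sigma.mpr ⟨Finset.mem_univ j, hp⟩⟩

lemma exu_of_kerTriv (μ : Fin r → Measure ℂ) (a b e : ℤ) (lo hi : Fin r → ℤ)
    (he : e ∈ Finset.Icc a b)
    (hcard : ((Finset.univ : Finset (Fin r)).sigma fun j => Finset.Icc (lo j) (hi j)).card + 1
      = (Finset.Icc a b).card)
    (hker : KerTriv μ a b lo hi e) : ∃! c : ℤ → ℂ, GenSys μ a b lo hi e c := by
  obtain ⟨c, hc⟩ := exists_genSys μ a b e lo hi he hcard hker
  exact ⟨c, hc, fun d hd => uniq_of_kerTriv hker hd hc⟩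

lemma exu_updown {A B : ℤ} {lo hi : Fin r → ℤ}
    (hA : A ∈ Finset.Icc A B) (hB : B ∈ Finset.Icc A B)
    (hcard1 : ((Finset.univ : Finset (Fin r)).sigma fun j => Finset.Icc (lo j) (hi j)).card + 1
      = (Finset.Icc A B).card)
    (hcard2 : ((Finset.univ : Finset (Fin r)).sigma
        fun j => Finset.Icc (lo j + 1) (hi j + 1)).card + 1 = (Finset.Icc A B).card) :
    (∃! c : ℤ → ℂ, GenSys μ A B (fun j => lo j + 1) (fun j => hi j + 1) A c)
      ↔ (∃! c : ℤ → ℂ, GenSys μ A B lo hi B c) := by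
  constructor
  · intro h
    exact exu_of_kerTriv μ A B B lo hi hB hcard1 (kerTriv_down (kerTriv_of_exu h))
  · intro h
    exact exu_of_kerTriv μ A B A (fun j => lo j + 1) (fun j => hi j + 1) hA hcard2
      (kerTriv_up (kerTriv_of_exu h))

lemma genSys_exu_congr {a b e : ℤ} {lo hi lo' hi' : Fin r → ℤ}
    (hlo : ∀ j, lo j = lo' j) (hhi : ∀ j, hi j = hi' j) :
    (∃! c : ℤ → ℂ, GenSys μ a b lo hi e c) ↔ (∃! c : ℤ → ℂ, GenSys μ a b lo' hi' e c) := by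
  rw [funext hlo, funext hhi]

lemma exu_cneg {P Q : (ℤ → ℂ) → Prop} (hPQ : ∀ c, P c → Q (cneg c))
    (hQP : ∀ c, Q c → P (cneg c)) (h : ∃! c, P c) : ∃! c, Q c := by
  obtain ⟨c₀, h₀, hu⟩ := h
  refine ⟨cneg c₀, hPQ _ h₀, fun d hd => ?_⟩
  have := hu (cneg d) (hQP d hd)
  rw [← cneg_cneg d, this]

lemma isPhi_to_star [∀ j, IsFiniteMeasure (μ j)]
    (hcirc : ∀ j, ∀ᵐ z ∂(μ j), ‖z‖ = 1) (n m : Fin r → ℕ) (c : ℤ → ℂ)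
    (h : IsPhi μ n m c) : IsPhiStar μ m n (cneg c) := by
  rw [isPhi_iff hcirc] at h
  rw [isPhiStar_iff hcirc]
  exact genSys_cneg hcirc _ _ _ _ _ rfl (by ring) rfl (fun j => by ring) (fun j => by ring) h

lemma star_to_phi [∀ j, IsFiniteMeasure (μ j)]
    (hcirc : ∀ j, ∀ᵐ z ∂(μ j), ‖z‖ = 1) (n m : Fin r → ℕ) (c : ℤ → ℂ)
    (h : IsPhiStar μ m n c) : IsPhi μ n m (cneg c) := by
  rw [isPhiStar_iff hcirc] at h
  rw [isPhi_iff hcirc]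
  exact genSys_cneg hcirc _ _ _ _ _ rfl (by ring) (by ring) (fun j => by ring)
    (fun j => by ring) h

lemma star_exu_iff_phi [∀ j, IsFiniteMeasure (μ j)]
    (hcirc : ∀ j, ∀ᵐ z ∂(μ j), ‖z‖ = 1) (n m : Fin r → ℕ) :
    (∃! c : ℤ → ℂ, IsPhiStar μ m n c) ↔ (∃! c : ℤ → ℂ, IsPhi μ m n c) := by
  have hn0 : (0 : ℤ) ≤ ∑ j, (n j : ℤ) := Finset.sum_nonneg fun j _ => Int.natCast_nonneg _
  have hm0 : (0 : ℤ) ≤ ∑ j, (m j : ℤ) := Finset.sum_nonneg fun j _ => Int.natCast_nonneg _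
  have hA : (-(∑ j, n j : ℤ)) ∈ Finset.Icc (-(∑ j, n j : ℤ)) ((∑ j, m j : ℤ)) := by
    simp only [Finset.mem_Icc]; omega
  have hB : ((∑ j, m j : ℤ)) ∈ Finset.Icc (-(∑ j, n j : ℤ)) ((∑ j, m j : ℤ)) := by
    simp only [Finset.mem_Icc]; omega
  have hIcc : (Finset.Icc (-(∑ j, n j : ℤ)) ((∑ j, m j : ℤ))).card
      = ∑ j, m j + ∑ j, n j + 1 := by
    rw [Int.card_Icc,
      (by push_cast; ring : (∑ j, m j : ℤ) + 1 - -(∑ j, n j : ℤ)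
        = ((∑ j, m j + ∑ j, n j + 1 : ℕ) : ℤ)), Int.toNat_natCast]
  have hcard1 : ((Finset.univ : Finset (Fin r)).sigma
      fun j => Finset.Icc (-(n j : ℤ)) ((m j : ℤ) - 1)).card + 1
      = (Finset.Icc (-(∑ j, n j : ℤ)) ((∑ j, m j : ℤ))).card := by
    rw [Finset.card_sigma, hIcc,
      Finset.sum_congr rfl (fun j _ => by
        rw [Int.card_Icc, (by push_cast; ring : (m j : ℤ) - 1 + 1 - -(n j : ℤ)
          = ((m j + n j : ℕ) : ℤ)), Int.toNat_natCast]),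
      Finset.sum_add_distrib]
  have hcard2 : ((Finset.univ : Finset (Fin r)).sigma
      fun j => Finset.Icc (-(n j : ℤ) + 1) ((m j : ℤ) - 1 + 1)).card + 1
      = (Finset.Icc (-(∑ j, n j : ℤ)) ((∑ j, m j : ℤ))).card := by
    rw [Finset.card_sigma, hIcc,
      Finset.sum_congr rfl (fun j _ => by
        rw [Int.card_Icc, (by push_cast; ring : (m j : ℤ) - 1 + 1 + 1 - (-(n j : ℤ) + 1)
          = ((m j + n j : ℕ) : ℤ)), Int.toNat_natCast]),
      Finset.sum_add_distrib]
  have e1 : (∃! c : ℤ → ℂ, IsPhiStar μ m n c) ↔ ∃! c : ℤ → ℂ,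
      GenSys μ (-(∑ j, n j : ℤ)) ((∑ j, m j : ℤ)) (fun j => -(n j : ℤ) + 1)
        (fun j => (m j : ℤ)) (-(∑ j, n j : ℤ)) c :=
    existsUnique_congr fun c => isPhiStar_iff hcirc m n c
  have e2 : (∃! c : ℤ → ℂ, IsPhi μ m n c) ↔ ∃! c : ℤ → ℂ,
      GenSys μ (-(∑ j, n j : ℤ)) ((∑ j, m j : ℤ)) (fun j => -(n j : ℤ))
        (fun j => (m j : ℤ) - 1) ((∑ j, m j : ℤ)) c :=
    existsUnique_congr fun c => isPhi_iff hcirc m n c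
  have e3 : (∃! c : ℤ → ℂ, GenSys μ (-(∑ j, n j : ℤ)) ((∑ j, m j : ℤ))
        (fun j => -(n j : ℤ) + 1) (fun j => (m j : ℤ)) (-(∑ j, n j : ℤ)) c)
      ↔ ∃! c : ℤ → ℂ, GenSys μ (-(∑ j, n j : ℤ)) ((∑ j, m j : ℤ))
        (fun j => -(n j : ℤ) + 1) (fun j => (m j : ℤ) - 1 + 1) (-(∑ j, n j : ℤ)) c :=
    genSys_exu_congr (fun j => rfl) (fun j => by ring)
  have e4 := exu_updown (μ := μ) (lo := fun j => -(n j : ℤ)) (hi := fun j => (m j : ℤ) - 1)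
    hA hB hcard1 hcard2
  exact e1.trans (e3.trans (e4.trans e2.symm))

end Aux

/-- `(n, m)` is normal iff `(m, n)` is normal, and in that case
`Φ_{n,m}^♯ = Φ*_{m,n}`, i.e. `conj (c (-k)) = c' k` for the respective coefficient
sequences. -/
theorem stmt15 (r : ℕ) (μ : Fin r → Measure ℂ) [∀ j, IsFiniteMeasure (μ j)]
    (hcirc : ∀ j, ∀ᵐ z ∂(μ j), ‖z‖ = 1)
    (hinf : ∀ j, {x : ℂ | ∀ U : Set ℂ, IsOpen U → x ∈ U → 0 < μ j U}.Infinite)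
    (n m : Fin r → ℕ) :
    (NormalPair μ n m ↔ NormalPair μ m n) ∧
    (NormalPair μ n m →
      ∀ c c' : ℤ → ℂ, IsPhi μ n m c → IsPhiStar μ m n c' →
        ∀ k : ℤ, (starRingEnd ℂ) (c (-k)) = c' k) := by
  have iff1 : NormalPair μ n m ↔ (∃! c : ℤ → ℂ, IsPhiStar μ m n c) :=
    ⟨exu_cneg (isPhi_to_star hcirc n m) (star_to_phi hcirc n m),
     exu_cneg (star_to_phi hcirc n m) (isPhi_to_star hcirc n m)⟩
  have iff2 : (∃! c : ℤ → ℂ, IsPhiStar μ m n c) ↔ NormalPair μ m n :=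
    star_exu_iff_phi hcirc n m
  refine ⟨iff1.trans iff2, ?_⟩
  intro hN c c' hc hc' k
  obtain ⟨c₀, h₀, hu⟩ := iff1.mp hN
  have h1 : cneg c = c₀ := hu _ (isPhi_to_star hcirc n m c hc)
  have h2 : c' = c₀ := hu _ hc'
  exact congrFun (h1.trans h2.symm) k
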